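/- Let S be a finite set with N elements, R ⊆ S × S a relation, and F : S → ℕ a coloring. If there exists an infinite R-path from a state p whose largest color occurring infinitely often is even, then there exist a state q, a finite R-path from p to q of length at most N, and an R-cycle from q back to q of length at least 1 and at most N such that F(q) is even and F(q) is the maximum color among the states on the cycle. In particular, the eventually periodic (lasso-shaped) path obtained by following the path from p to q and then repeating the cycle forever is an infinite R-path from p whose largest infinitely occurring color is even, with preperiod and period each at most N. -/

import Mathlib

lemma cut_lemma {S : Type} (R : S → S → Prop) (f : ℕ → S) (L i j : ℕ)
    (hR : ∀ k < L, R (f k) (f (k + 1))) (hij : i < j) (hjL : j ≤ L) (heq : f i = f j) :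
    ∃ f' : ℕ → S, f' 0 = f 0 ∧ f' (L - (j - i)) = f L ∧
      (∀ k < L - (j - i), R (f' k) (f' (k + 1))) ∧
      (∀ k ≤ L - (j - i), ∃ k' ≤ L, f' k = f k') := by
  set d := j - i with hd
  have hd1 : 1 ≤ d := by omega
  have hdL : d ≤ L := by omega
  have hiL' : i ≤ L - d := by omega
  refine ⟨fun k => if k ≤ i then f k else f (k + d), by simp, ?_, ?_, ?_⟩
  · by_cases hc : L - d ≤ i
    · have h1 : L - d = i := le_antisymm hc hiL'
      have h2 : j = L := by omega
      simp only [h1, le_refl, if_pos]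
      rw [heq, h2]
    · simp only [if_neg hc]
      congr 1
      omega
  · intro k hk
    by_cases h1 : k + 1 ≤ i
    · simp only [if_pos (by omega : k ≤ i), if_pos h1]
      exact hR k (by omega)
    · by_cases h2 : k ≤ i
      · have hk_eq : k = i := by omega
        simp only [if_pos h2, if_neg h1]
        rw [hk_eq, heq]
        have : i + 1 + d = j + 1 := by omega
        rw [this]
        exact hR j (by omega)
      · simp only [if_neg h2, if_neg (by omega : ¬ k + 1 ≤ i)]
        have : k + 1 + d = k + d + 1 := by omega
        rw [this]
        exact hR (k + d) (by omega)
  · intro k hk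
    by_cases h2 : k ≤ i
    · exact ⟨k, by omega, by simp [h2]⟩
    · exact ⟨k + d, by omega, by simp [h2]⟩

lemma shorten {S : Type} [Fintype S] (R : S → S → Prop) :
    ∀ L : ℕ, ∀ f : ℕ → S, (∀ k < L, R (f k) (f (k + 1))) →
    ∃ (L' : ℕ) (f' : ℕ → S), min L 1 ≤ L' ∧ L' ≤ Fintype.card S ∧
      f' 0 = f 0 ∧ f' L' = f L ∧ (∀ k < L', R (f' k) (f' (k + 1))) ∧
      (∀ k ≤ L', ∃ k' ≤ L, f' k = f k') := by
  intro L
  induction L using Nat.strong_induction_on with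
  | _ L IH =>
    intro f hR
    by_cases hL : L ≤ Fintype.card S
    · exact ⟨L, f, min_le_left _ _, hL, rfl, rfl, hR, fun k hk => ⟨k, hk, rfl⟩⟩
    · push_neg at hL
      have hne : Nonempty S := ⟨f 0⟩
      have hN1 : 1 ≤ Fintype.card S := Fintype.card_pos
      obtain ⟨x, y, hxy, hfe⟩ := Fintype.exists_ne_map_eq_of_card_lt
        (fun x : Fin (Fintype.card S + 1) => f x) (by simp)
      set i := min (x : ℕ) (y : ℕ) with hi
      set j := max (x : ℕ) (y : ℕ) with hj
      have hij : i < j := by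
        rcases lt_or_gt_of_ne (fun hc : (x:ℕ) = (y:ℕ) => hxy (Fin.ext hc)) with h | h <;> omega
      have hjN : j ≤ Fintype.card S := by
        have := x.isLt; have := y.isLt; omega
      have heq : f i = f j := by
        rcases le_total (x : ℕ) (y : ℕ) with h | h
        · simp only [hi, hj, min_eq_left h, max_eq_right h]; exact hfe
        · simp only [hi, hj, min_eq_right h, max_eq_left h]; exact hfe.symm
      obtain ⟨f'', h0, hend, hpath, hran⟩ := cut_lemma R f L i j hR hij (by omega) heq
      obtain ⟨L', f', hmin, hcard, h0', hend', hpath', hran'⟩ :=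
        IH (L - (j - i)) (by omega) f'' hpath
      refine ⟨L', f', ?_, hcard, h0'.trans h0, hend'.trans hend, hpath', ?_⟩
      · have : min (L - (j - i)) 1 = 1 := by omega
        omega
      · intro k hk
        obtain ⟨k'', hk'', he⟩ := hran' k hk
        obtain ⟨k', hk', he'⟩ := hran k'' hk''
        exact ⟨k', hk', he.trans he'⟩



/-- An infinite path `f` (through some relation) is winning if the largest color
occurring infinitely often along it is even: there is an even color `c` occurring
infinitely often such that every color occurring infinitely often is at most `c`. -/
def MaxParityWin {S : Type} (F : S → ℕ) (f : ℕ → S) : Prop :=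
  ∃ c, Even c ∧ {i | F (f i) = c}.Infinite ∧ ∀ d, {i | F (f i) = d}.Infinite → d ≤ c

/-- If a winning infinite `R`-path starts at `p` (over a finite
state set `S` with `N` elements), then there are a state `q`, a finite `R`-path from
`p` to `q` of length at most `N` and an `R`-cycle at `q` of length between 1 and `N`
such that `F q` is even and is the maximum color on the cycle; in particular the
corresponding lasso-shaped path is a winning infinite `R`-path from `p` with
preperiod and period at most `N`. -/
theorem winning_path_implies_winning_lasso
    {S : Type} [Fintype S] (R : S → S → Prop) (F : S → ℕ) (p : S)
    (h : ∃ f : ℕ → S, f 0 = p ∧ (∀ i, R (f i) (f (i + 1))) ∧ MaxParityWin F f) :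
    ∃ (q : S) (n m : ℕ) (f g : ℕ → S),
      n ≤ Fintype.card S ∧ f 0 = p ∧ f n = q ∧ (∀ i < n, R (f i) (f (i + 1))) ∧
      1 ≤ m ∧ m ≤ Fintype.card S ∧ g 0 = q ∧ g m = q ∧ (∀ i < m, R (g i) (g (i + 1))) ∧
      Even (F q) ∧ (∀ i ≤ m, F (g i) ≤ F q) ∧
      (let lasso : ℕ → S := fun i => if i < n then f i else g ((i - n) % m)
       lasso 0 = p ∧ (∀ i, R (lasso i) (lasso (i + 1))) ∧ MaxParityWin F lasso) := by
  obtain ⟨f, hf0, hfR, c, hceven, hcinf, hcmax⟩ := h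
  -- Step 1: a state q with color c visited infinitely often
  obtain ⟨q, hq⟩ : ∃ q : S, {i | f i = q ∧ F (f i) = c}.Infinite := by
    by_contra hcon
    push_neg at hcon
    apply hcinf
    have he : {i | F (f i) = c} = ⋃ q ∈ (Set.univ : Set S), {i | f i = q ∧ F (f i) = c} := by
      ext i; simp
    rw [he]
    exact Set.Finite.biUnion Set.finite_univ (fun q _ => hcon q)
  have hFq : F q = c := by
    obtain ⟨i, hi1, hi2⟩ := hq.nonempty
    rw [← hi1]; exact hi2
  -- Step 2: a tail bound T beyond which all colors are ≤ c
  have hbig : {i | c < F (f i)}.Finite := by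
    have hcolors : {d : ℕ | c < d ∧ ∃ i, F (f i) = d}.Finite := by
      apply (Set.finite_range F).subset
      rintro d ⟨-, i, hi⟩; exact ⟨f i, hi⟩
    have hsub : {i | c < F (f i)} ⊆
        ⋃ d ∈ {d : ℕ | c < d ∧ ∃ i, F (f i) = d}, {i | F (f i) = d} := by
      intro i hi
      simp only [Set.mem_iUnion, Set.mem_setOf_eq]
      exact ⟨F (f i), ⟨hi, i, rfl⟩, rfl⟩
    refine Set.Finite.subset (Set.Finite.biUnion hcolors ?_) hsub
    intro d hd
    by_contra hinf
    exact absurd (hcmax d hinf) (Nat.not_le.mpr hd.1)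
  obtain ⟨T, hT⟩ := hbig.bddAbove
  have htail : ∀ i, T < i → F (f i) ≤ c := by
    intro i hi
    by_contra hc
    push_neg at hc
    have : i ≤ T := hT hc
    omega
  -- Step 3: pick i₀ < j₀ beyond T where f visits q
  obtain ⟨i₀, hi₀mem, hi₀T⟩ := hq.exists_gt T
  obtain ⟨j₀, hj₀mem, hj₀⟩ := hq.exists_gt i₀
  have hfi₀ : f i₀ = q := hi₀mem.1
  have hfj₀ : f j₀ = q := hj₀mem.1
  -- shorten the prefix
  obtain ⟨n, f', hnmin, hncard, hf'0, hf'end, hf'path, -⟩ :=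
    shorten R i₀ f (fun k _ => hfR k)
  -- the cycle
  set g₀ : ℕ → S := fun k => f (i₀ + k) with hg₀
  have hg₀path : ∀ k < j₀ - i₀, R (g₀ k) (g₀ (k + 1)) := by
    intro k _
    have : i₀ + (k + 1) = i₀ + k + 1 := by omega
    simp only [hg₀, this]
    exact hfR (i₀ + k)
  obtain ⟨m, g, hmmin, hmcard, hg00, hgend, hgpath, hgran⟩ :=
    shorten R (j₀ - i₀) g₀ hg₀path
  have hf'q : f' n = q := hf'end.trans hfi₀
  have hm1 : 1 ≤ m := by
    have : min (j₀ - i₀) 1 = 1 := by omega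
    omega
  have hg0 : g 0 = q := by rw [hg00]; simpa [hg₀] using hfi₀
  have hgm : g m = q := by
    rw [hgend]
    have : i₀ + (j₀ - i₀) = j₀ := by omega
    simp only [hg₀, this]; exact hfj₀
  have hbound : ∀ k ≤ m, F (g k) ≤ F q := by
    intro k hk
    obtain ⟨k', _, he⟩ := hgran k hk
    rw [he, hFq]
    exact htail (i₀ + k') (by omega)
  refine ⟨q, n, m, f', g, hncard, by rw [hf'0, hf0], hf'q, hf'path,
    hm1, hmcard, hg0, hgm, hgpath, hFq ▸ hceven, hbound, ?_, ?_, ?_⟩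
  -- lasso 0 = p
  · by_cases h0 : 0 < n
    · simp only [if_pos h0]
      rw [hf'0, hf0]
    · have hn0 : n = 0 := by omega
      have hqp : q = p := by rw [← hf'q, hn0, hf'0, hf0]
      simp [hn0, hg0, hqp]
  -- lasso is an R-path
  · intro i
    by_cases h1 : i + 1 < n
    · simp only [if_pos (by omega : i < n), if_pos h1]
      exact hf'path i (by omega)
    · by_cases h2 : i < n
      · have hin : i + 1 = n := by omega
        simp only [if_pos h2, if_neg (by omega : ¬ i + 1 < n)]
        have : (i + 1 - n) % m = 0 := by rw [hin]; simp
        rw [this, hg0, ← hf'q, ← hin]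
        exact hf'path i (by omega)
      · push_neg at h2
        simp only [if_neg (by omega : ¬ i < n), if_neg (by omega : ¬ i + 1 < n)]
        set k := (i - n) % m with hk_def
        have hk : k < m := Nat.mod_lt _ (by omega)
        have hstep : (i + 1 - n) % m = (k + 1) % m := by
          have h3 : i + 1 - n = (i - n) + 1 := by omega
          rw [h3]
          conv_rhs => rw [Nat.add_mod, Nat.mod_eq_of_lt hk, ← Nat.add_mod]
        rw [hstep]
        by_cases hk1 : k + 1 < m
        · rw [Nat.mod_eq_of_lt hk1]
          exact hgpath k hk
        · have : k + 1 = m := by omega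
          rw [this, Nat.mod_self, hg0, ← hgm, ← this]
          exact hgpath k hk
  -- MaxParityWin of the lasso
  · refine ⟨F q, hFq ▸ hceven, ?_, ?_⟩
    · apply Set.infinite_of_injective_forall_mem (f := fun t : ℕ => n + t * m)
      · intro a b hab
        simp only at hab
        exact Nat.eq_of_mul_eq_mul_right (by omega) (Nat.add_left_cancel hab)
      · intro t
        simp only [Set.mem_setOf_eq, if_neg (by omega : ¬ n + t * m < n)]
        have : (n + t * m - n) % m = 0 := by
          have : n + t * m - n = t * m := by omega
          rw [this, Nat.mul_mod_left]
        rw [this, hg0]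
    · intro d hd
      obtain ⟨i, hi_mem, hi_gt⟩ := hd.exists_gt n
      simp only [Set.mem_setOf_eq, if_neg (by omega : ¬ i < n)] at hi_mem
      rw [← hi_mem]
      exact hbound _ (le_of_lt (Nat.mod_lt _ (by omega)))
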